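/- There exists n₀ such that for every n ≥ n₀, every ε ∈ (0,1), and every uniform fractional matching x in a graph G=(V,E) on n vertices, there exists an (ε, ε⁴/(24·log₂² n))-split of x: vectors z⁽¹⁾, …, z⁽ᵏ⁾ ∈ ℝ_{≥0}^E, each an (ε, ε⁴/(24·log₂² n))-coarsening of x, with pairwise disjoint supports contained in supp(x), such that Σ_i |supp(z⁽ⁱ⁾)| ≥ |supp(x)|/2. -/

import Mathlib

open Finset

variable {V : Type*} [Fintype V] [DecidableEq V]

/-- The fractional degree `x(v) := Σ_{e ∋ v} x_e` of a vertex `v` under `x`. -/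
noncomputable def fracDeg (x : Sym2 V → ℝ) (v : V) : ℝ :=
  ∑ e : Sym2 V, if v ∈ e then x e else 0

/-- `‖x‖ := Σ_e x_e`. -/
noncomputable def vnorm (x : Sym2 V → ℝ) : ℝ :=
  ∑ e : Sym2 V, x e

/-- `d^ε_V(x,y) := Σ_{v∈V} max(|x(v) − y(v)| − ε, 0)`. -/
noncomputable def dV (ε : ℝ) (x y : Sym2 V → ℝ) : ℝ :=
  ∑ v : V, max (|fracDeg x v - fracDeg y v| - ε) 0

/-- `x'` is an `(ε,δ)`-coarsening of `x`: `x' ∈ ℝ_{≥0}^E` with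
(C0) `supp(x') ⊆ supp(x)`; (C1) `|‖x‖ − ‖x'‖| ≤ ε‖x‖ + ε`; (C2) `d^ε_V(x,x') ≤ ε‖x‖ + ε`;
(C3) `x'_e ∈ {0} ∪ [δ, 2δ)` whenever `x_e < δ`, and `x'_e = x_e` whenever `x_e ≥ δ`. -/
def IsCoarsening (ε δ : ℝ) (x x' : Sym2 V → ℝ) : Prop :=
  (∀ e, 0 ≤ x' e) ∧
  (∀ e, x' e ≠ 0 → x e ≠ 0) ∧
  |vnorm x - vnorm x'| ≤ ε * vnorm x + ε ∧
  dV ε x x' ≤ ε * vnorm x + ε ∧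
  (∀ e, x e < δ → x' e = 0 ∨ (δ ≤ x' e ∧ x' e < 2 * δ)) ∧
  (∀ e, δ ≤ x e → x' e = x e)

/-- A coarsening is bounded if additionally (C4) `x'(v) ≤ x(v) + ε` for every vertex `v`. -/
def IsBoundedCoarsening (ε δ : ℝ) (x x' : Sym2 V → ℝ) : Prop :=
  IsCoarsening ε δ x x' ∧ ∀ v : V, fracDeg x' v ≤ fracDeg x v + ε

section Split
set_option linter.unusedSectionVars false
set_option linter.unreachableTactic false
set_option linter.unusedTactic false
variable {V : Type} [DecidableEq V]

/-- number of edges of `S` incident to `v` -/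
def degN (S : Finset (Sym2 V)) (v : V) : ℕ := (S.filter (fun e => v ∈ e)).card

lemma degN_mono {A S : Finset (Sym2 V)} (h : A ⊆ S) (v : V) : degN A v ≤ degN S v :=
  Finset.card_le_card (Finset.filter_subset_filter _ h)

lemma degN_union {A B : Finset (Sym2 V)} (h : Disjoint A B) (v : V) :
    degN (A ∪ B) v = degN A v + degN B v := by
  unfold degN
  rw [Finset.filter_union, Finset.card_union_of_disjoint]
  exact Finset.disjoint_filter_filter h

def inc2 (v : V) (a : V × V) : ℕ :=
  (if v = a.1 then 1 else 0) + (if v = a.2 then 1 else 0)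

def eL (p : List (V × V)) : List (Sym2 V) := p.map fun a => s(a.1, a.2)

def cA : Bool → List (V × V) → V → ℕ
  | _, [], _ => 0
  | b, a :: l, v => (if b then inc2 v a else 0) + cA (!b) l v

def cS : Bool → List (V × V) → ℕ
  | _, [] => 0
  | b, _ :: l => (if b then 1 else 0) + cS (!b) l

def colorL : Bool → List (V × V) → List (Sym2 V)
  | _, [] => []
  | b, a :: l => (if b then [s(a.1, a.2)] else []) ++ colorL (!b) l

def altI (v : V) : List (V × V) → ℤ
  | [] => 0
  | a :: l => (inc2 v a : ℤ) - altI v l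

def altS : List (V × V) → ℤ
  | [] => 0
  | _ :: l => 1 - altS l

lemma cA_sub (p : List (V × V)) (v : V) :
    (cA true p v : ℤ) - (cA false p v : ℤ) = altI v p := by
  induction p with
  | nil => simp [cA, altI]
  | cons a l ih =>
      simp only [cA, altI, if_true, if_false, Bool.not_true, Bool.not_false]
      push_cast
      linarith

lemma cS_sub (p : List (V × V)) :
    (cS true p : ℤ) - (cS false p : ℤ) = altS p := by
  induction p with
  | nil => simp [cS, altS]
  | cons a l ih =>
      simp only [cS, altS, if_true, if_false, Bool.not_true, Bool.not_false]
      push_cast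
      linarith

lemma cS_add (b : Bool) (p : List (V × V)) :
    cS b p + cS (!b) p = p.length := by
  induction p generalizing b with
  | nil => simp [cS]
  | cons a l ih =>
      have := ih (!b)
      cases b <;> simp [cS] at * <;> omega

lemma altS_bounds (p : List (V × V)) : 0 ≤ altS p ∧ altS p ≤ 1 := by
  induction p with
  | nil => simp [altS]
  | cons a l ih => simp only [altS]; omega

lemma altI_eq (v : V) : ∀ (l : List (V × V)) (a : V × V),
    List.Chain' (fun x y => x.2 = y.1) (a :: l) →
    altI v (a :: l) = (if v = a.1 then (1:ℤ) else 0) +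
      (-1) ^ l.length *
        (if v = ((a :: l).getLast (List.cons_ne_nil a l)).2 then (1:ℤ) else 0) := by
  intro l
  induction l with
  | nil =>
      intro a _
      simp [altI, inc2]
      rfl
  | cons a' l' ih =>
      intro a hch
      have h1 : a.2 = a'.1 := (List.isChain_cons_cons.mp hch).1
      have h2 : List.Chain' (fun x y => x.2 = y.1) (a' :: l') := (List.isChain_cons_cons.mp hch).2
      have hlast : ((a :: a' :: l').getLast (List.cons_ne_nil _ _)) =
          ((a' :: l').getLast (List.cons_ne_nil _ _)) := List.getLast_cons _
      have : altI v (a :: a' :: l') = (inc2 v a : ℤ) - altI v (a' :: l') := rfl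
      rw [this, ih a' h2, hlast]
      simp only [inc2, List.length_cons]
      push_cast
      rw [h1]
      ring

lemma altI_abs_le (v : V) (l : List (V × V)) (a : V × V)
    (hch : List.Chain' (fun x y => x.2 = y.1) (a :: l)) :
    |altI v (a :: l)| ≤ 2 := by
  rw [altI_eq v l a hch]
  have h1 : |(if v = a.1 then (1:ℤ) else 0)| ≤ 1 := by split <;> simp
  have h2 : |(-1:ℤ) ^ l.length *
      (if v = ((a :: l).getLast (List.cons_ne_nil a l)).2 then (1:ℤ) else 0)| ≤ 1 := by
    rw [abs_mul, abs_pow, abs_neg, abs_one, one_pow, one_mul]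
    split <;> simp
  have h3 := abs_add_le ((if v = a.1 then (1:ℤ) else 0))
    ((-1) ^ l.length *
      (if v = ((a :: l).getLast (List.cons_ne_nil a l)).2 then (1:ℤ) else 0))
  omega

lemma altI_zero (v : V) (l : List (V × V)) (a : V × V)
    (hch : List.Chain' (fun x y => x.2 = y.1) (a :: l))
    (h1 : v ≠ a.1) (h2 : v ≠ ((a :: l).getLast (List.cons_ne_nil a l)).2) :
    altI v (a :: l) = 0 := by
  rw [altI_eq v l a hch, if_neg h1, if_neg h2]
  ring

lemma colorL_sublist (b : Bool) (p : List (V × V)) : (colorL b p).Sublist (eL p) := by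
  induction p generalizing b with
  | nil => simp [colorL, eL]
  | cons a l ih =>
      cases b
      · simpa [colorL, eL] using (ih true).cons s(a.1, a.2)
      · simpa [colorL, eL] using (ih false).cons₂ s(a.1, a.2)

lemma colorL_subset (b : Bool) (p : List (V × V)) {e : Sym2 V} (h : e ∈ colorL b p) :
    e ∈ eL p := (colorL_sublist b p).mem h

lemma colorL_nodup (b : Bool) (p : List (V × V)) (h : (eL p).Nodup) :
    (colorL b p).Nodup := (colorL_sublist b p).nodup h

lemma mem_iff_inc2 {v : V} {a : V × V} (hne : a.1 ≠ a.2) :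
    (if v ∈ s(a.1, a.2) then 1 else 0) = inc2 v a := by
  have hm : (v ∈ s(a.1, a.2)) ↔ (v = a.1 ∨ v = a.2) := Sym2.mem_iff
  by_cases h1 : v = a.1 <;> by_cases h2 : v = a.2 <;>
    · rw [inc2]
      split <;> simp_all

lemma degN_insert {e₀ : Sym2 V} {T : Finset (Sym2 V)} (h : e₀ ∉ T) (v : V) :
    degN (insert e₀ T) v = (if v ∈ e₀ then 1 else 0) + degN T v := by
  unfold degN
  rw [Finset.filter_insert]
  split
  · rw [Finset.card_insert_of_notMem (fun hc => h (Finset.mem_of_mem_filter _ hc))]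
    omega
  · omega

lemma eL_cons (a : V × V) (l : List (V × V)) : eL (a :: l) = s(a.1, a.2) :: eL l := rfl

lemma degN_colorL (b : Bool) (p : List (V × V)) (hnd : (eL p).Nodup)
    (hloop : ∀ a ∈ p, a.1 ≠ a.2) (v : V) :
    degN (colorL b p).toFinset v = cA b p v := by
  induction p generalizing b with
  | nil => simp [colorL, cA, degN]
  | cons a l ih =>
      rw [eL_cons, List.nodup_cons] at hnd
      have hndl := hnd.2
      have hmem := hnd.1
      have hloopl : ∀ x ∈ l, x.1 ≠ x.2 := fun x hx => hloop x (List.mem_cons_of_mem a hx)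
      have ha := hloop a List.mem_cons_self
      cases b
      · have : colorL false (a :: l) = colorL true l := by simp [colorL]
        rw [this, ih true hndl hloopl]
        simp [cA]
      · have hc : colorL true (a :: l) = s(a.1, a.2) :: colorL false l := by simp [colorL]
        have hnotin : s(a.1, a.2) ∉ (colorL false l).toFinset := by
          rw [List.mem_toFinset]
          exact fun hc' => hmem (colorL_subset false l hc')
        rw [hc, List.toFinset_cons, degN_insert hnotin, ih false hndl hloopl,
          mem_iff_inc2 ha]
        simp [cA]

lemma degN_eL (p : List (V × V)) (hnd : (eL p).Nodup)
    (hloop : ∀ a ∈ p, a.1 ≠ a.2) (v : V) :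
    degN (eL p).toFinset v = cA true p v + cA false p v := by
  induction p with
  | nil => simp [eL, cA, degN]
  | cons a l ih =>
      rw [eL_cons, List.nodup_cons] at hnd
      have hloopl : ∀ x ∈ l, x.1 ≠ x.2 := fun x hx => hloop x (List.mem_cons_of_mem a hx)
      have ha := hloop a List.mem_cons_self
      have hnotin : s(a.1, a.2) ∉ (eL l).toFinset := by
        rw [List.mem_toFinset]; exact hnd.1
      rw [eL_cons, List.toFinset_cons, degN_insert hnotin, ih hnd.2 hloopl,
        mem_iff_inc2 ha]
      simp [cA]
      omega

lemma length_colorL (b : Bool) (p : List (V × V)) : (colorL b p).length = cS b p := by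
  induction p generalizing b with
  | nil => simp [colorL, cS]
  | cons a l ih => cases b <;> simp [colorL, cS, ih] <;> omega

lemma card_colorL (b : Bool) (p : List (V × V)) (hnd : (eL p).Nodup) :
    (colorL b p).toFinset.card = cS b p := by
  rw [List.toFinset_card_of_nodup (colorL_nodup b p hnd), length_colorL]

def IsTr (S : Finset (Sym2 V)) (p : List (V × V)) : Prop :=
  List.Chain' (fun x y => x.2 = y.1) p ∧ (eL p).Nodup ∧
  ∀ a ∈ p, a.1 ≠ a.2 ∧ s(a.1, a.2) ∈ S

lemma IsTr.eL_subset {S : Finset (Sym2 V)} {p : List (V × V)} (h : IsTr S p) :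
    (eL p).toFinset ⊆ S := by
  intro e he
  rw [List.mem_toFinset] at he
  obtain ⟨a, ha, rfl⟩ := List.mem_map.mp he
  exact (h.2.2 a ha).2

lemma IsTr.length_le {S : Finset (Sym2 V)} {p : List (V × V)} (h : IsTr S p) :
    p.length ≤ S.card := by
  calc p.length = (eL p).length := (List.length_map _).symm
    _ = (eL p).toFinset.card := (List.toFinset_card_of_nodup h.2.1).symm
    _ ≤ S.card := Finset.card_le_card h.eL_subset

lemma split_exists : ∀ (S : Finset (Sym2 V)), (∀ e ∈ S, ¬ e.IsDiag) →
    ∃ A, A ⊆ S ∧ (∀ v, |2 * (degN A v : ℤ) - (degN S v : ℤ)| ≤ 2) ∧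
      |2 * (A.card : ℤ) - (S.card : ℤ)| ≤ 1 := by
  intro S
  induction S using Finset.strongInduction with
  | _ S ih =>
    intro hS
    classical
    rcases S.eq_empty_or_nonempty with rfl | hne0
    · exact ⟨∅, Finset.Subset.refl _, by simp [degN], by simp⟩
    obtain ⟨e₀, he₀⟩ := hne0
    obtain ⟨a₀, b₀, rfl⟩ : ∃ a b, e₀ = s(a, b) := by
      induction e₀ using Sym2.ind with
      | _ a b => exact ⟨a, b, rfl⟩
    have he₀' : s(a₀, b₀) ∈ S := he₀
    have hab₀ : a₀ ≠ b₀ := by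
      intro h
      exact hS _ he₀' (by rw [Sym2.mk_isDiag_iff]; exact h)
    -- a maximal trail
    set P : ℕ → Prop := fun n => ∃ p, IsTr S p ∧ p.length = n with hP
    have hP1 : P 1 := by
      refine ⟨[(a₀, b₀)], ⟨List.isChain_singleton _, by simp [eL], ?_⟩, rfl⟩
      intro a ha
      simp only [List.mem_singleton] at ha
      subst ha
      exact ⟨hab₀, he₀'⟩
    have hS1 : 1 ≤ S.card := Finset.card_pos.mpr ⟨_, he₀'⟩
    set N := Nat.findGreatest P S.card with hN
    have hPN : P N := Nat.findGreatest_spec hS1 hP1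
    have hN1 : 1 ≤ N := Nat.le_findGreatest hS1 hP1
    have hmax : ∀ q, IsTr S q → q.length ≤ N :=
      fun q hq => Nat.le_findGreatest hq.length_le ⟨q, hq, rfl⟩
    obtain ⟨p, htr, hplen⟩ := hPN
    have hne : p ≠ [] := by
      intro h
      rw [h] at hplen
      simp at hplen
      omega
    -- extension impossible: end vertices are saturated
    have hext2 : ∀ e ∈ S, (p.getLast hne).2 ∈ e → e ∈ eL p := by
      intro e heS hve
      by_contra hnot
      obtain ⟨u, rfl⟩ := Sym2.mem_iff_exists.mp hve
      have huv : (p.getLast hne).2 ≠ u := by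
        intro h
        exact hS _ heS (by rw [Sym2.mk_isDiag_iff]; exact h)
      have htq : IsTr S (p ++ [((p.getLast hne).2, u)]) := by
        refine ⟨?_, ?_, ?_⟩
        · show List.IsChain _ _; rw [List.isChain_append]
          refine ⟨htr.1, List.isChain_singleton _, ?_⟩
          intro x hx y hy
          rw [List.getLast?_eq_getLast hne, Option.mem_some_iff] at hx
          simp only [List.head?_cons, Option.mem_some_iff] at hy
          subst hx; subst hy; rfl
        · have : eL (p ++ [((p.getLast hne).2, u)]) = eL p ++ [s((p.getLast hne).2, u)] := by
            simp [eL]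
          rw [this, List.nodup_append]
          exact ⟨htr.2.1, List.nodup_singleton _, by simpa using fun (a : Sym2 V) (ha : a ∈ eL p) (h : a = s((p.getLast hne).2, u)) => hnot (h ▸ ha)⟩
        · intro a ha
          rw [List.mem_append, List.mem_singleton] at ha
          rcases ha with ha | rfl
          · exact htr.2.2 a ha
          · exact ⟨huv, heS⟩
      have := hmax _ htq
      rw [List.length_append, List.length_singleton, hplen] at this
      omega
    have hext1 : ∀ e ∈ S, (p.head hne).1 ∈ e → e ∈ eL p := by
      intro e heS hve
      by_contra hnot
      obtain ⟨u, rfl⟩ := Sym2.mem_iff_exists.mp hve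
      have huv : u ≠ (p.head hne).1 := by
        intro h
        exact hS _ heS (by rw [Sym2.eq_swap, Sym2.mk_isDiag_iff]; exact h)
      have htq : IsTr S ((u, (p.head hne).1) :: p) := by
        refine ⟨?_, ?_, ?_⟩
        · show List.IsChain _ _; rw [List.isChain_cons]
          refine ⟨?_, htr.1⟩
          intro y hy
          rw [List.head?_eq_head hne, Option.mem_some_iff] at hy
          subst hy; rfl
        · have : eL ((u, (p.head hne).1) :: p) = s(u, (p.head hne).1) :: eL p := rfl
          rw [this, List.nodup_cons]
          refine ⟨?_, htr.2.1⟩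
          rw [Sym2.eq_swap]
          exact hnot
        · intro a ha
          rw [List.mem_cons] at ha
          rcases ha with rfl | ha
          · exact ⟨huv, by rw [Sym2.eq_swap]; exact heS⟩
          · exact htr.2.2 a ha
      have := hmax _ htq
      rw [List.length_cons, hplen] at this
      omega
    -- remove the trail, recurse
    set T : Finset (Sym2 V) := (eL p).toFinset with hT
    have hTS : T ⊆ S := htr.eL_subset
    have hTne : T.Nonempty := by
      obtain ⟨a, l, rfl⟩ := List.exists_cons_of_ne_nil hne
      exact ⟨s(a.1, a.2), by simp [hT, eL]⟩
    have hTcard : T.card = p.length := by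
      rw [hT, List.toFinset_card_of_nodup htr.2.1, eL, List.length_map]
    have hss : S \ T ⊂ S := Finset.sdiff_ssubset hTS hTne
    have hS' : ∀ e ∈ S \ T, ¬ e.IsDiag := fun e he => hS e (Finset.mem_sdiff.mp he).1
    obtain ⟨A', hA'sub, hv', hg'⟩ := ih (S \ T) hss hS'
    -- end vertices have no edges outside the trail
    have hz : ∀ v, (v = (p.head hne).1 ∨ v = (p.getLast hne).2) → degN (S \ T) v = 0 := by
      intro v hv
      unfold degN
      rw [Finset.card_eq_zero, Finset.filter_eq_empty_iff]
      intro e he hvine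
      rw [Finset.mem_sdiff] at he
      refine he.2 ?_
      rw [hT, List.mem_toFinset]
      rcases hv with rfl | rfl
      · exact hext1 e he.1 hvine
      · exact hext2 e he.1 hvine
    -- choose the colour of the trail to balance the global count
    have hbex : ∃ b : Bool,
        |(2 * (A'.card : ℤ) - ((S \ T).card : ℤ)) + (2 * (cS b p : ℤ) - (p.length : ℤ))| ≤ 1 := by
      have h1 := cS_sub p
      have h2 : (cS true p : ℤ) + (cS false p : ℤ) = (p.length : ℤ) := by
        exact_mod_cast cS_add true p
      have h3 := altS_bounds p
      rw [abs_le] at hg'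
      by_cases hG : 2 * (A'.card : ℤ) - ((S \ T).card : ℤ) ≤ 0
      · exact ⟨true, by rw [abs_le]; omega⟩
      · exact ⟨false, by rw [abs_le]; omega⟩
    obtain ⟨b, hb⟩ := hbex
    have hdisjST : Disjoint (S \ T) T := Finset.sdiff_disjoint
    have hdisjA : Disjoint A' (colorL b p).toFinset := by
      refine Finset.disjoint_left.mpr ?_
      intro e heA' heC
      have heT : e ∈ T := by
        rw [hT, List.mem_toFinset]
        exact colorL_subset b p (List.mem_toFinset.mp heC)
      exact (Finset.mem_sdiff.mp (hA'sub heA')).2 heT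
    have hloopp : ∀ a ∈ p, a.1 ≠ a.2 := fun a ha => (htr.2.2 a ha).1
    refine ⟨A' ∪ (colorL b p).toFinset, ?_, ?_, ?_⟩
    · -- subset
      apply Finset.union_subset (hA'sub.trans (Finset.sdiff_subset))
      refine Finset.Subset.trans ?_ hTS
      intro e he
      rw [List.mem_toFinset] at he
      rw [hT, List.mem_toFinset]
      exact colorL_subset b p he
    · -- vertex balance
      intro v
      have hsplitS : degN S v = degN (S \ T) v + degN T v := by
        conv_lhs => rw [← Finset.sdiff_union_of_subset hTS]
        exact degN_union hdisjST v
      have hsplitA : degN (A' ∪ (colorL b p).toFinset) v = degN A' v + cA b p v := by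
        rw [degN_union hdisjA v, degN_colorL b p htr.2.1 hloopp v]
      have hTdeg : degN T v = cA true p v + cA false p v := degN_eL p htr.2.1 hloopp v
      have hsub := cA_sub p v
      obtain ⟨a, l, rfl⟩ := List.exists_cons_of_ne_nil hne
      by_cases hv : v = a.1 ∨ v = ((a :: l).getLast (List.cons_ne_nil a l)).2
      · have h0 : degN (S \ T) v = 0 := hz v hv
        have h0A : degN A' v = 0 := Nat.eq_zero_of_le_zero (h0 ▸ degN_mono hA'sub v)
        have halt : |altI v (a :: l)| ≤ 2 := altI_abs_le v l a htr.1
        rw [hsplitA, hsplitS, h0, h0A, hTdeg]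
        rw [abs_le] at halt ⊢
        cases b <;> push_cast <;> omega
      · push_neg at hv
        have halt : altI v (a :: l) = 0 := altI_zero v l a htr.1 hv.1 hv.2
        have hfin := hv' v
        rw [hsplitA, hsplitS, hTdeg]
        rw [abs_le] at hfin ⊢
        cases b <;> push_cast at hfin ⊢ <;> omega
    · -- size balance
      have hcardA : (A' ∪ (colorL b p).toFinset).card = A'.card + cS b p := by
        rw [Finset.card_union_of_disjoint hdisjA, card_colorL b p htr.2.1]
      have hcards : ((S \ T).card : ℤ) + (p.length : ℤ) = (S.card : ℤ) := by
        have h := Finset.card_sdiff_add_card_eq_card hTS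
        rw [hTcard] at h
        exact_mod_cast h
      rw [hcardA]
      rw [abs_le] at hb ⊢
      push_cast
      omega

lemma parts_exists (r : ℕ) : ∀ (S : Finset (Sym2 V)), (∀ e ∈ S, ¬ e.IsDiag) →
    ∃ L : List (Finset (Sym2 V)), L.length = 2 ^ r ∧ (∀ P ∈ L, P ⊆ S) ∧
      L.Pairwise Disjoint ∧ (L.map Finset.card).sum = S.card ∧
      (∀ P ∈ L, ∀ v, |(2:ℤ) ^ r * (degN P v : ℤ) - (degN S v : ℤ)| ≤ 2 * 2 ^ r - 2) ∧
      (∀ P ∈ L, |(2:ℤ) ^ r * (P.card : ℤ) - (S.card : ℤ)| ≤ 2 ^ r - 1) := by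
  induction r with
  | zero =>
      intro S hS
      refine ⟨[S], rfl, by simp, List.pairwise_singleton _ _, by simp, ?_, ?_⟩ <;>
        · intro P hP
          simp only [List.mem_singleton] at hP
          subst hP
          simp
  | succ r ih =>
      intro S hS
      obtain ⟨A, hAS, hAv, hAg⟩ := split_exists S hS
      have hBs : ∀ e ∈ S \ A, ¬ e.IsDiag := fun e he => hS e (Finset.mem_sdiff.mp he).1
      have hAs : ∀ e ∈ A, ¬ e.IsDiag := fun e he => hS e (hAS he)
      obtain ⟨L₁, hl₁, hs₁, hp₁, hsum₁, hv₁, hg₁⟩ := ih A hAs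
      obtain ⟨L₂, hl₂, hs₂, hp₂, hsum₂, hv₂, hg₂⟩ := ih (S \ A) hBs
      have hdisj : Disjoint A (S \ A) := Finset.disjoint_sdiff
      have hdegS : ∀ v, degN A v + degN (S \ A) v = degN S v := by
        intro v
        conv_rhs => rw [← Finset.union_sdiff_of_subset hAS]
        exact (degN_union hdisj v).symm
      have hcards : A.card + (S \ A).card = S.card := by
        have := Finset.card_sdiff_add_card_eq_card hAS
        omega
      have hBv : ∀ v, |2 * (degN (S \ A) v : ℤ) - (degN S v : ℤ)| ≤ 2 := by
        intro v
        have h1 := hAv v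
        have h2 := hdegS v
        rw [abs_le] at h1 ⊢
        omega
      have hBg : |2 * ((S \ A).card : ℤ) - (S.card : ℤ)| ≤ 1 := by
        rw [abs_le] at hAg ⊢
        omega
      refine ⟨L₁ ++ L₂, ?_, ?_, ?_, ?_, ?_, ?_⟩
      · rw [List.length_append, hl₁, hl₂, pow_succ]
        omega
      · intro P hP
        rcases List.mem_append.mp hP with h | h
        · exact (hs₁ P h).trans hAS
        · exact (hs₂ P h).trans (Finset.sdiff_subset)
      · refine List.pairwise_append.mpr ⟨hp₁, hp₂, ?_⟩
        intro P hP Q hQ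
        exact (hdisj.mono_right (hs₂ Q hQ)).mono_left (hs₁ P hP)
      · rw [List.map_append, List.sum_append, hsum₁, hsum₂, hcards]
      · intro P hP v
        rcases List.mem_append.mp hP with h | h
        · have h1 := hv₁ P h v
          have h2 := hAv v
          have e : (2:ℤ) ^ (r+1) * (degN P v : ℤ) - (degN S v : ℤ) =
              2 * ((2:ℤ) ^ r * (degN P v : ℤ) - (degN A v : ℤ)) +
              (2 * (degN A v : ℤ) - (degN S v : ℤ)) := by
            rw [pow_succ]; ring
          rw [abs_le] at h1 h2 ⊢
          rw [pow_succ] at *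
          constructor <;> linarith
        · have h1 := hv₂ P h v
          have h2 := hBv v
          rw [abs_le] at h1 h2 ⊢
          rw [pow_succ] at *
          constructor <;> linarith
      · intro P hP
        rcases List.mem_append.mp hP with h | h
        · have h1 := hg₁ P h
          rw [abs_le] at h1 hAg ⊢
          rw [pow_succ] at *
          constructor <;> linarith
        · have h1 := hg₂ P h
          rw [abs_le] at h1 hBg ⊢
          rw [pow_succ] at *
          constructor <;> linarith

lemma fin_sum_card (L : List (Finset (Sym2 V))) :
    ∑ i : Fin L.length, ((L.get i).card : ℝ) = (((L.map Finset.card).sum : ℕ) : ℝ) := by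
  induction L with
  | nil => simp
  | cons P L ih =>
      have hgs : ∀ i : Fin L.length, ((P :: L).get i.succ) = L.get i := fun i => rfl
      simp only [List.length_cons, Fin.sum_univ_succ, List.map_cons,
        List.sum_cons, List.get_cons_zero, hgs]
      rw [ih]
      push_cast
      ring

end Split

/-- There exists `n₀` such that for every `n ≥ n₀`, every `ε ∈ (0,1)`, and every uniform
fractional matching `x` in a graph `G = (V,E)` on `n` vertices, there exists an
`(ε, ε⁴/(24·log₂² n))`-split of `x`: vectors `z⁽¹⁾, …, z⁽ᵏ⁾ ∈ ℝ_{≥0}^E`, each an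
`(ε, ε⁴/(24·log₂² n))`-coarsening of `x`, with pairwise disjoint supports contained in
`supp(x)`, such that `Σ_i |supp(z⁽ⁱ⁾)| ≥ |supp(x)|/2`. -/
theorem stmt_13 :
    ∃ n₀ : ℕ, ∀ (V : Type) [Fintype V] [DecidableEq V] (G : SimpleGraph V),
      n₀ ≤ Fintype.card V →
      ∀ ε : ℝ, 0 < ε → ε < 1 →
      ∀ x : Sym2 V → ℝ,
        (∀ e, 0 ≤ x e) → (∀ e, x e ≠ 0 → e ∈ G.edgeSet) →
        (∀ v, fracDeg x v ≤ 1) →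
        (∃ lam : ℝ, 0 < lam ∧ ∀ e, x e ≠ 0 → x e = lam) →
        ∃ (k : ℕ) (z : Fin k → Sym2 V → ℝ),
          (∀ i, IsCoarsening ε
            (ε ^ 4 / (24 * (Real.logb 2 (Fintype.card V : ℝ)) ^ 2)) x (z i)) ∧
          (∀ i, ∀ e, z i e ≠ 0 → x e ≠ 0) ∧
          (∀ i j, i ≠ j → ∀ e, z i e ≠ 0 → z j e = 0) ∧
          ((Finset.univ.filter (fun e : Sym2 V => x e ≠ 0)).card : ℝ) / 2 ≤
            ∑ i, ((Finset.univ.filter (fun e : Sym2 V => z i e ≠ 0)).card : ℝ) := by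
  use 4
  intro V _ _ G hn ε hε0 hε1 x hx0 hxG hdeg hunif
  obtain ⟨lam, hlam, hxl⟩ := hunif
  classical
  set δ := ε ^ 4 / (24 * (Real.logb 2 (Fintype.card V : ℝ)) ^ 2) with hδdef
  have hlog : (2:ℝ) ≤ Real.logb 2 (Fintype.card V : ℝ) := by
    have h4 : (4:ℝ) ≤ (Fintype.card V : ℝ) := by exact_mod_cast hn
    have hl4 : Real.logb 2 4 = 2 := by
      rw [show (4:ℝ) = 2^(2:ℕ) by norm_num, Real.logb_pow,
        Real.logb_self_eq_one (by norm_num)]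
      norm_num
    calc (2:ℝ) = Real.logb 2 4 := hl4.symm
      _ ≤ Real.logb 2 (Fintype.card V : ℝ) := by
          unfold Real.logb
          have h1 := Real.log_le_log (by norm_num : (0:ℝ) < 4) h4
          have h2 : 0 < Real.log 2 := Real.log_pos (by norm_num)
          gcongr
  have hlogpos : (0:ℝ) < Real.logb 2 (Fintype.card V : ℝ) := by linarith
  have hδpos : 0 < δ := by
    rw [hδdef]
    positivity
  have hδ96 : δ ≤ ε ^ 4 / 96 := by
    rw [hδdef]
    apply div_le_div_of_nonneg_left (by positivity) (by norm_num)
    nlinarith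
  have hε4 : ε ^ 4 ≤ ε := by
    have h3 : ε ^ 3 ≤ 1 := pow_le_one₀ hε0.le hε1.le
    nlinarith
  have h4δ : 4 * δ ≤ ε := by nlinarith
  set S := Finset.univ.filter (fun e : Sym2 V => x e ≠ 0) with hSdef
  have hmemS : ∀ e, e ∈ S ↔ x e ≠ 0 := by
    intro e
    rw [hSdef, Finset.mem_filter]
    simp
  have hSloop : ∀ e ∈ S, ¬ e.IsDiag :=
    fun e he => G.not_isDiag_of_mem_edgeSet (hxG e ((hmemS e).mp he))
  have hvx : vnorm x = lam * S.card := by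
    rw [vnorm, ← Finset.sum_filter_ne_zero Finset.univ, ← hSdef,
      Finset.sum_congr rfl (fun e he => hxl e ((hmemS e).mp he)),
      Finset.sum_const, nsmul_eq_mul, mul_comm]
  have hvx0 : 0 ≤ vnorm x := by
    rw [hvx]
    positivity
  have hfx : ∀ v, fracDeg x v = lam * (degN S v : ℝ) := by
    intro v
    rw [fracDeg,
      show (∑ e : Sym2 V, if v ∈ e then x e else 0)
        = ∑ e ∈ S, (if v ∈ e then x e else 0) from
        (Finset.sum_subset (Finset.subset_univ S) (fun e _ he => by
          have hxe : x e = 0 := by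
            by_contra hc
            exact he ((hmemS e).mpr hc)
          simp [hxe])).symm,
      ← Finset.sum_filter]
    rw [Finset.sum_congr rfl (fun e he => hxl e ((hmemS e).mp (Finset.mem_of_mem_filter e he)))]
    rw [Finset.sum_const, nsmul_eq_mul, mul_comm]
    rfl
  by_cases hcase : δ ≤ lam
  · -- λ ≥ δ : x itself is a coarsening, k = 1
    refine ⟨1, fun _ => x, ?_, ?_, ?_, ?_⟩
    · intro i
      refine ⟨hx0, fun e h => h, ?_, ?_, ?_, ?_⟩
      · rw [sub_self, abs_zero]
        positivity
      · rw [dV]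
        have hz : ∀ v ∈ Finset.univ (α := V), max (|fracDeg x v - fracDeg x v| - ε) 0 = 0 := by
          intro v _
          rw [sub_self, abs_zero, zero_sub, max_eq_right (by linarith)]
        rw [Finset.sum_congr rfl hz, Finset.sum_const, smul_zero]
        positivity
      · intro e he
        left
        by_contra hne
        rw [hxl e hne] at he
        linarith
      · intro e _
        rfl
    · intro i e h
      exact h
    · intro i j hij
      exact absurd (Subsingleton.elim i j) hij
    · rw [Fin.sum_univ_one]
      have h0 : (0:ℝ) ≤ ((Finset.univ.filter (fun e : Sym2 V => x e ≠ 0)).card : ℝ) :=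
        Nat.cast_nonneg _
      linarith
  · -- λ < δ
    push_neg at hcase
    obtain ⟨m, hm⟩ := pow_unbounded_of_one_lt (δ / lam) (by norm_num : (1:ℝ) < 2)
    have hQ : ∃ r : ℕ, δ ≤ lam * 2 ^ r := by
      refine ⟨m, ?_⟩
      rw [div_lt_iff₀ hlam] at hm
      nlinarith
    set r := Nat.find hQ with hrdef
    have hr1 : δ ≤ lam * 2 ^ r := Nat.find_spec hQ
    have hr0 : r ≠ 0 := by
      intro h
      rw [h] at hr1
      simp at hr1
      linarith
    have hr2 : lam * 2 ^ r < 2 * δ := by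
      have hmin : ¬ (δ ≤ lam * 2 ^ (r - 1)) := Nat.find_min hQ (by omega)
      push_neg at hmin
      have hpow : (2:ℝ) ^ r = 2 * 2 ^ (r - 1) := by
        rw [← pow_succ']
        congr 1
        omega
      rw [hpow]
      nlinarith
    set μ := lam * 2 ^ r with hμdef
    have hμδ : δ ≤ μ := hr1
    have hμ2δ : μ < 2 * δ := hr2
    have hμpos : 0 < μ := lt_of_lt_of_le hδpos hμδ
    obtain ⟨L, hLlen, hLsub, hLdisj, hLsum, hLv, hLc⟩ := parts_exists r S hSloop
    have hgetmem : ∀ i : Fin L.length, L.get i ∈ L := by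
      intro i
      have := L.get_mem i
      simpa using this
    have hμne : μ ≠ 0 := hμpos.ne'
    refine ⟨L.length, fun i e => if e ∈ L.get i then μ else 0, ?_, ?_, ?_, ?_⟩
    · intro i
      have hPmem : L.get i ∈ L := hgetmem i
      have hPS : L.get i ⊆ S := hLsub _ hPmem
      have hvz : vnorm (fun e => if e ∈ L.get i then μ else 0) = μ * ((L.get i).card : ℝ) := by
        rw [vnorm, Finset.sum_ite_mem, Finset.univ_inter, Finset.sum_const, nsmul_eq_mul, mul_comm]
      have hfz : ∀ v, fracDeg (fun e => if e ∈ L.get i then μ else 0) v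
          = μ * (degN (L.get i) v : ℝ) := by
        intro v
        rw [fracDeg]
        rw [show (∑ e : Sym2 V, if v ∈ e then (if e ∈ L.get i then μ else 0) else 0)
            = ∑ e ∈ L.get i, (if v ∈ e then μ else 0) from ?_]
        · rw [← Finset.sum_filter, Finset.sum_const, nsmul_eq_mul, mul_comm]
          rfl
        · rw [← Finset.sum_subset (Finset.subset_univ (L.get i))
              (fun e _ he => by simp [List.get_eq_getElem] at he ⊢; intro _ hc; exact absurd hc he)]
          refine Finset.sum_congr rfl (fun e he => ?_)
          simp only [List.get_eq_getElem] at he ⊢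
          rw [if_pos he]
      have hvR : ∀ v, |(2:ℝ)^r * ((degN (L.get i) v : ℕ) : ℝ) - ((degN S v : ℕ) : ℝ)|
          ≤ 2 * 2^r - 2 := by
        intro v
        exact_mod_cast hLv _ hPmem v
      have hcR : |(2:ℝ)^r * (((L.get i).card : ℕ) : ℝ) - ((S.card : ℕ) : ℝ)| ≤ 2^r - 1 := by
        exact_mod_cast hLc _ hPmem
      refine ⟨?_, ?_, ?_, ?_, ?_, ?_⟩
      · intro e
        dsimp only
        split
        · exact hμpos.le
        · exact le_refl 0
      · intro e he
        dsimp only at he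
        by_cases hin : e ∈ L.get i
        · exact (hmemS e).mp (hPS hin)
        · rw [if_neg hin] at he
          exact absurd rfl he
      · -- C1
        have key : |vnorm x - vnorm (fun e => if e ∈ L.get i then μ else 0)| ≤ ε := by
          rw [hvz, hvx]
          have heq : lam * ((S.card : ℕ) : ℝ) - μ * (((L.get i).card : ℕ) : ℝ)
              = -(lam * ((2:ℝ)^r * (((L.get i).card : ℕ) : ℝ) - ((S.card : ℕ) : ℝ))) := by
            rw [hμdef]
            ring
          rw [heq, abs_neg, abs_mul, abs_of_pos hlam]
          have h1 : lam * |(2:ℝ)^r * (((L.get i).card : ℕ) : ℝ) - ((S.card : ℕ) : ℝ)|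
              ≤ lam * (2^r - 1) := mul_le_mul_of_nonneg_left hcR hlam.le
          have h2 : lam * ((2:ℝ)^r - 1) ≤ μ := by
            rw [hμdef]
            nlinarith
          linarith
        have h0 : 0 ≤ ε * vnorm x := by positivity
        linarith
      · -- C2
        rw [dV]
        have hterm : ∀ v ∈ Finset.univ (α := V),
            max (|fracDeg x v - fracDeg (fun e => if e ∈ L.get i then μ else 0) v| - ε) 0 = 0 := by
          intro v _
          rw [hfx v, hfz v]
          have heq : lam * ((degN S v : ℕ) : ℝ) - μ * ((degN (L.get i) v : ℕ) : ℝ)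
              = -(lam * ((2:ℝ)^r * ((degN (L.get i) v : ℕ) : ℝ) - ((degN S v : ℕ) : ℝ))) := by
            rw [hμdef]
            ring
          rw [heq, abs_neg, abs_mul, abs_of_pos hlam]
          have h1 : lam * |(2:ℝ)^r * ((degN (L.get i) v : ℕ) : ℝ) - ((degN S v : ℕ) : ℝ)|
              ≤ lam * (2 * 2^r - 2) := mul_le_mul_of_nonneg_left (hvR v) hlam.le
          have h2 : lam * (2 * (2:ℝ)^r - 2) ≤ 2 * μ := by
            rw [hμdef]
            nlinarith
          rw [max_eq_right]
          linarith
        rw [Finset.sum_congr rfl hterm, Finset.sum_const, smul_zero]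
        positivity
      · intro e _
        dsimp only
        by_cases hin : e ∈ L.get i
        · right
          rw [if_pos hin]
          exact ⟨hμδ, hμ2δ⟩
        · left
          rw [if_neg hin]
      · intro e he
        exfalso
        by_cases hxe : x e = 0
        · rw [hxe] at he
          linarith
        · rw [hxl e hxe] at he
          linarith
    · intro i e he
      dsimp only at he
      by_cases hin : e ∈ L.get i
      · exact (hmemS e).mp (hLsub _ (hgetmem i) hin)
      · rw [if_neg hin] at he
        exact absurd rfl he
    · intro i j hij e hei
      dsimp only at hei ⊢
      by_cases hin : e ∈ L.get i
      · have hdisj : Disjoint (L.get i) (L.get j) := by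
          rcases lt_or_gt_of_ne hij with h | h
          · exact List.pairwise_iff_get.mp hLdisj i j h
          · exact (List.pairwise_iff_get.mp hLdisj j i h).symm
        rw [if_neg (Finset.disjoint_left.mp hdisj hin)]
      · rw [if_neg hin] at hei
        exact absurd rfl hei
    · have hfilter : ∀ i : Fin L.length,
          (Finset.univ.filter (fun e : Sym2 V =>
            (fun (i : Fin L.length) (e : Sym2 V) => if e ∈ L.get i then μ else 0) i e ≠ 0))
          = L.get i := by
        intro i
        ext e
        simp only [Finset.mem_filter, Finset.mem_univ, true_and]
        by_cases hin : e ∈ L.get i <;> simp [hin, hμne]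
      rw [Finset.sum_congr rfl (fun i _ => by rw [hfilter i])]
      rw [fin_sum_card L, hLsum]
      have h0 : (0:ℝ) ≤ ((S.card : ℕ) : ℝ) := Nat.cast_nonneg _
      linarith
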